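/- As x → 0⁻ one has A(x) = 1/l + x²/(2l³) + o(x²) and B(x) = −l/x − x/(6l) + o(x); that is, lim_{x→0⁻} (A(x) − 1/l − x²/(2l³))/x² = 0 and lim_{x→0⁻} (B(x) + l/x + x/(6l))/x = 0. -/

import Mathlib

open MeasureTheory Filter Set Topology

set_option maxHeartbeats 2000000

/-- The metric coefficient `F(r) = 1 - 2M/r + r²/l²`. -/
noncomputable def F (M l r : ℝ) : ℝ := 1 - 2*M/r + r^2/l^2

/-- The potential `A(x) = F(r(x))^{1/2}/r(x)`. -/
noncomputable def A (M l : ℝ) (rfun : ℝ → ℝ) (x : ℝ) : ℝ :=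
  Real.sqrt (F M l (rfun x)) / rfun x

/-- The potential `B(x) = F(r(x))^{1/2}`. -/
noncomputable def B (M l : ℝ) (rfun : ℝ → ℝ) (x : ℝ) : ℝ :=
  Real.sqrt (F M l (rfun x))

/-- As `x → 0⁻`, `A(x) = 1/l + x²/(2l³) + o(x²)` and
`B(x) = −l/x − x/(6l) + o(x)`. -/
lemma intpow (m : ℕ) (r : ℝ) (hr : 0 < r) :
    IntegrableOn (fun s : ℝ => (s ^ (m + 2))⁻¹) (Ioi r) ∧
      (∫ s in Ioi r, (s ^ (m + 2))⁻¹) = ((m + 1 : ℝ) * r ^ (m + 1))⁻¹ := by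
  have hm : ((m : ℝ) + 1) ≠ 0 := by positivity
  set g : ℝ → ℝ := fun s => -((m : ℝ) + 1)⁻¹ * (s ^ (m + 1))⁻¹ with hg
  have hderiv : ∀ s ∈ Ici r, HasDerivAt g ((s ^ (m + 2))⁻¹) s := by
    intro s hs
    have hs0 : s ≠ 0 := ne_of_gt (lt_of_lt_of_le hr hs)
    have h1 : HasDerivAt (fun s : ℝ => s ^ (m + 1)) (((m:ℝ) + 1) * s ^ m) s := by
      simpa using hasDerivAt_pow (m + 1) s
    have h2 := (h1.inv (pow_ne_zero _ hs0)).const_mul (-((m : ℝ) + 1)⁻¹)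
    refine h2.congr_deriv ?_
    field_simp
    ring
  have hpos : ∀ s ∈ Ioi r, 0 ≤ (s ^ (m + 2))⁻¹ := by
    intro s hs
    have : (0:ℝ) < s := lt_trans hr hs
    positivity
  have htend : Tendsto g atTop (𝓝 0) := by
    have h1 : Tendsto (fun s : ℝ => (s ^ (m + 1))⁻¹) atTop (𝓝 0) :=
      (tendsto_pow_atTop (Nat.succ_ne_zero m)).inv_tendsto_atTop
    have := h1.const_mul (-((m : ℝ) + 1)⁻¹)
    simpa [hg, neg_mul] using this
  constructor
  · exact integrableOn_Ioi_deriv_of_nonneg' hderiv hpos htend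
  · rw [integral_Ioi_of_hasDerivAt_of_nonneg' hderiv hpos htend]
    have : r ^ (m + 1) ≠ 0 := by positivity
    simp only [hg]
    field_simp [hg]
    ring


section Part2
variable (M l : ℝ)

-- packaged pointwise hypotheses, established "eventually" separately
theorem part2 (hM : 0 < M) (hl : 0 < l)
    (rfun : ℝ → ℝ) (C : ℝ) (hC : 0 < C)
    (hFpos' : ∀ x, x < 0 → 0 < F M l (rfun x))
    (hev : ∀ᶠ x in nhdsWithin (0:ℝ) (Set.Iio 0),
      x < 0 ∧ 0 < rfun x ∧ 0 < (rfun x)⁻¹ ∧ (rfun x)⁻¹ ≤ 2*(-x)/l^2 ∧ (-x) ≤ 1 ∧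
      |(-x) - (l^2*(rfun x)⁻¹ - l^4/3*((rfun x)⁻¹)^3)| ≤ C/4*((rfun x)⁻¹)^4) :
    Tendsto (fun x => (A M l rfun x - 1/l - x^2/(2*l^3)) / x^2)
      (nhdsWithin 0 (Set.Iio 0)) (nhds 0) ∧
    Tendsto (fun x => (B M l rfun x + l/x + x/(6*l)) / x)
      (nhdsWithin 0 (Set.Iio 0)) (nhds 0) := by
  set L := nhdsWithin (0:ℝ) (Set.Iio 0) with hL
  set u : ℝ → ℝ := fun y => (rfun y)⁻¹ with hu
  set K₁ : ℝ := 8/(3*l^2) + 4*C/l^8 with hK₁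
  set K₂ : ℝ := 7*K₁/3 + 4*C/l^6 with hK₂
  have hK₁pos : 0 < K₁ := by positivity
  have hK₂pos : 0 < K₂ := by positivity
  have hlne : l ≠ 0 := ne_of_gt hl
  -- b1 : |l²u + x| ≤ K₁ (-x)³
  have b1 : ∀ᶠ x in L, |l^2 * u x + x| ≤ K₁ * (-x)^3 := by
    filter_upwards [hev] with x ⟨hx0, hr0, hu0, hu2, hv1, hE⟩
    set v := -x with hv
    have hv0 : 0 < v := by simp [hv]; linarith
    have hid : l^2 * u x + x = l^4*(u x)^3/3 - ((-x) - (l^2*(u x) - l^4/3*(u x)^3)) := by ring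
    have hu3 : (u x)^3 ≤ (2*v/l^2)^3 := pow_le_pow_left₀ hu0.le hu2 3
    have hu4 : (u x)^4 ≤ (2*v/l^2)^4 := pow_le_pow_left₀ hu0.le hu2 4
    have e3 : (2*v/l^2)^3 = 8*v^3/l^6 := by field_simp; ring
    have e4 : (2*v/l^2)^4 = 16*v^4/l^8 := by field_simp; ring
    have t1 : l^4*(u x)^3/3 ≤ 8/(3*l^2)*v^3 := by
      have h := mul_le_mul_of_nonneg_left (hu3.trans_eq e3) (show (0:ℝ) ≤ l^4/3 by positivity)
      have e5 : l^4/3 * (8*v^3/l^6) = 8/(3*l^2)*v^3 := by field_simp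
      linarith [h.trans_eq e5]
    have t2 : C/4*(u x)^4 ≤ 4*C/l^8*v^3 := by
      have h := mul_le_mul_of_nonneg_left (hu4.trans_eq e4) (show (0:ℝ) ≤ C/4 by positivity)
      have e5 : C/4 * (16*v^4/l^8) = 4*C/l^8*v^4 := by field_simp; ring
      have e6 : 4*C/l^8*v^4 ≤ 4*C/l^8*v^3 := by
        have h7 : v^4 ≤ v^3 := by nlinarith [pow_pos hv0 3]
        exact mul_le_mul_of_nonneg_left h7 (by positivity)
      linarith [h.trans_eq e5]
    calc |l^2 * u x + x| ≤ l^4*(u x)^3/3 + |(-x) - (l^2*(u x) - l^4/3*(u x)^3)| := by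
          rw [hid]; refine (abs_sub _ _).trans ?_
          have : |l^4*(u x)^3/3| = l^4*(u x)^3/3 := abs_of_nonneg (by positivity)
          linarith [this.le]
      _ ≤ l^4*(u x)^3/3 + C/4*(u x)^4 := by linarith
      _ ≤ 8/(3*l^2)*v^3 + 4*C/l^8*v^3 := by linarith
      _ = K₁ * (-x)^3 := by rw [hK₁]; ring
  -- b2 : |l⁴u + l²x + x³/3| ≤ K₂ (-x)⁴
  have b2 : ∀ᶠ x in L, |l^4 * u x + l^2*x + x^3/3| ≤ K₂ * (-x)^4 := by
    filter_upwards [hev, b1] with x ⟨hx0, hr0, hu0, hu2, hv1, hE⟩ hb1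
    set v := -x with hv
    have hv0 : 0 < v := by simp [hv]; linarith
    have hid : l^4 * u x + l^2*x + x^3/3
        = (l^2*u x + x)*(l^4*(u x)^2 - l^2*(u x)*x + x^2)/3
          - l^2*((-x) - (l^2*(u x) - l^4/3*(u x)^3)) := by ring
    have hxv : x = -v := by simp [hv]
    have hPalt : l^4*(u x)^2 - l^2*(u x)*x + x^2 = l^4*(u x)^2 + l^2*(u x)*v + v^2 := by
      rw [hxv]; ring
    have hP0 : 0 ≤ l^4*(u x)^2 - l^2*(u x)*x + x^2 := by
      rw [hPalt]; positivity
    have hP : l^4*(u x)^2 - l^2*(u x)*x + x^2 ≤ 7*v^2 := by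
      have h1 : l^2 * u x ≤ 2*v := by
        have := mul_le_mul_of_nonneg_left hu2 (show (0:ℝ) ≤ l^2 by positivity)
        have e : l^2 * (2*v/l^2) = 2*v := by field_simp
        linarith [this.trans_eq e]
      have h2 : l^4*(u x)^2 ≤ 4*v^2 := by
        nlinarith [mul_self_le_mul_self (by positivity : (0:ℝ) ≤ l^2 * u x) h1]
      have h4 : (l^2*u x)*v ≤ 2*v*v := mul_le_mul_of_nonneg_right h1 hv0.le
      rw [hPalt]; nlinarith
    have hu4 : (u x)^4 ≤ 16*v^4/l^8 := by
      have h := pow_le_pow_left₀ hu0.le hu2 4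
      have e4 : (2*v/l^2)^4 = 16*v^4/l^8 := by field_simp; ring
      linarith [h.trans_eq e4]
    have t1 : |(l^2*u x + x)*(l^4*(u x)^2 - l^2*(u x)*x + x^2)/3| ≤ 7*K₁/3 * v^4 := by
      rw [abs_div, abs_mul]
      rw [abs_of_nonneg hP0]
      have : |(3:ℝ)| = 3 := by norm_num
      rw [this]
      rw [div_le_iff₀ (by norm_num : (0:ℝ) < 3)]
      calc |l^2*u x + x| * (l^4*(u x)^2 - l^2*(u x)*x + x^2)
          ≤ (K₁*v^3) * (7*v^2) := by
            apply mul_le_mul hb1 hP hP0 (by positivity)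
        _ = 7*K₁/3*v^4*3 * v := by ring
        _ ≤ 7*K₁/3*v^4*3 := mul_le_of_le_one_right (by positivity) hv1
    have t2 : |l^2*((-x) - (l^2*(u x) - l^4/3*(u x)^3))| ≤ 4*C/l^6*v^4 := by
      rw [abs_mul, abs_of_nonneg (show (0:ℝ) ≤ l^2 by positivity)]
      have h := mul_le_mul_of_nonneg_left hE (show (0:ℝ) ≤ l^2 by positivity)
      have h2 : l^2 * (C/4*(u x)^4) ≤ l^2 * (C/4*(16*v^4/l^8)) :=
        mul_le_mul_of_nonneg_left (mul_le_mul_of_nonneg_left hu4 (by positivity))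
          (by positivity)
      have e : l^2 * (C/4*(16*v^4/l^8)) = 4*C/l^6*v^4 := by field_simp; ring
      linarith [h.trans (h2.trans_eq e)]
    calc |l^4 * u x + l^2*x + x^3/3|
        ≤ |(l^2*u x + x)*(l^4*(u x)^2 - l^2*(u x)*x + x^2)/3|
          + |l^2*((-x) - (l^2*(u x) - l^4/3*(u x)^3))| := by
          rw [hid]; exact abs_sub _ _
      _ ≤ 7*K₁/3 * v^4 + 4*C/l^6*v^4 := by linarith
      _ = K₂ * (-x)^4 := by rw [hK₂]; ring
  -- helper: tendsto of c * |x|^n style functions to 0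
  have hconst_pow : ∀ (c : ℝ) (n : ℕ), 0 < n → Tendsto (fun x : ℝ => c * |x|^n) L (nhds 0) := by
    intro c n hn
    have h2 : Tendsto (fun x : ℝ => c * |x|^n) (nhds 0) (nhds 0) := by
      have h0 : Continuous fun x : ℝ => c * |x|^n := continuous_const.mul (continuous_abs.pow n)
      simpa [zero_pow hn.ne'] using h0.tendsto 0
    exact h2.mono_left nhdsWithin_le_nhds
  -- T1 : u/x → -1/l²
  have T1 : Tendsto (fun x => u x / x) L (nhds (-(1/l^2))) := by
    have hsq : Tendsto (fun x => u x / x + 1/l^2) L (nhds 0) := by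
      apply squeeze_zero_norm' (a := fun x => K₁/l^2 * |x|^2)
      · filter_upwards [hev, b1] with x ⟨hx0, hr0, hu0, hu2, hv1, hE⟩ hb1
        have hxne : x ≠ 0 := ne_of_lt hx0
        have habs : |x| = -x := abs_of_neg hx0
        have hid : u x / x + 1/l^2 = (l^2 * u x + x)/(l^2 * x) := by
          field_simp
        rw [Real.norm_eq_abs, hid, abs_div, abs_mul, abs_of_nonneg (show (0:ℝ) ≤ l^2 by positivity)]
        rw [div_le_iff₀ (by positivity : (0:ℝ) < l^2 * |x|)]
        calc |l^2 * u x + x| ≤ K₁ * (-x)^3 := hb1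
          _ = K₁/l^2 * |x|^2 * (l^2 * |x|) := by rw [habs]; field_simp
      · exact hconst_pow _ 2 (by norm_num)
    have := hsq.sub_const (1/l^2)
    simp only [zero_sub] at this
    apply this.congr
    intro x; ring
  -- T2 : x/u → -l²
  have T2 : Tendsto (fun x => x / u x) L (nhds (-l^2)) := by
    have hne : -(1/l^2) ≠ 0 := by
      simp [hlne]
    have := T1.inv₀ hne
    have heq : (-(1/l^2))⁻¹ = -l^2 := by field_simp
    rw [heq] at this
    apply this.congr
    intro x; rw [inv_div]
  -- T3 : u → 0
  have T3 : Tendsto u L (nhds 0) := by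
    apply squeeze_zero_norm' (a := fun x => 2/l^2 * |x|^1)
    · filter_upwards [hev] with x ⟨hx0, hr0, hu0, hu2, hv1, hE⟩
      have habs : |x| = -x := abs_of_neg hx0
      rw [Real.norm_eq_abs, abs_of_pos hu0]
      calc (rfun x)⁻¹ ≤ 2*(-x)/l^2 := hu2
        _ = 2/l^2 * |x|^1 := by rw [habs]; ring
    · exact hconst_pow _ 1 (by norm_num)
  -- A in terms of u
  have hAeq : ∀ᶠ x in L, A M l rfun x = Real.sqrt (1/l^2 + (u x)^2 - 2*M*(u x)^3) := by
    filter_upwards [hev] with x ⟨hx0, hr0, hu0, hu2, hv1, hE⟩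
    simp only [hu]
    have hrne : rfun x ≠ 0 := ne_of_gt hr0
    have hF0 : 0 ≤ F M l (rfun x) := (hFpos' x hx0).le
    have h2 : F M l (rfun x) * ((rfun x)⁻¹)^2
        = 1/l^2 + ((rfun x)⁻¹)^2 - 2*M*((rfun x)⁻¹)^3 := by
      unfold F
      field_simp
      ring
    rw [show A M l rfun x = Real.sqrt (F M l (rfun x)) / rfun x from rfl, ← h2,
      Real.sqrt_mul hF0, Real.sqrt_sq hu0.le]
    rw [div_eq_mul_inv]
  have hinner0 : ∀ᶠ x in L, 0 ≤ 1/l^2 + (u x)^2 - 2*M*(u x)^3 := by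
    filter_upwards [hev] with x ⟨hx0, hr0, hu0, hu2, hv1, hE⟩
    simp only [hu]
    have hrne : rfun x ≠ 0 := ne_of_gt hr0
    have h2 : F M l (rfun x) * ((rfun x)⁻¹)^2
        = 1/l^2 + ((rfun x)⁻¹)^2 - 2*M*((rfun x)⁻¹)^3 := by
      unfold F; field_simp; ring
    rw [← h2]
    exact mul_nonneg (hFpos' x hx0).le (by positivity)
  -- T5 : A → 1/l
  have hinner : Tendsto (fun x => 1/l^2 + (u x)^2 - 2*M*(u x)^3) L (nhds (1/l^2)) := by
    have h := ((tendsto_const_nhds (x := (1/l^2 : ℝ))).add (T3.pow 2)).sub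
      ((T3.pow 3).const_mul (2*M))
    have hv : (1/l^2 + 0^2 - 2*M*0^3 : ℝ) = 1/l^2 := by norm_num
    rw [hv] at h
    exact h
  have T5 : Tendsto (fun x => A M l rfun x) L (nhds (1/l)) := by
    have h := (Real.continuous_sqrt.tendsto _).comp hinner
    have heq : Real.sqrt (1/l^2) = 1/l := by
      rw [one_div, one_div, Real.sqrt_inv, Real.sqrt_sq hl.le]
    rw [heq] at h
    exact Tendsto.congr' (hAeq.mono fun x hx => hx.symm) h
  -- Goal 1
  have G1 : Tendsto (fun x => (A M l rfun x - 1/l - x^2/(2*l^3)) / x^2) L (nhds 0) := by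
    have hEq1 : ∀ᶠ x in L, (A M l rfun x - 1/l - x^2/(2*l^3)) / x^2
        = (((u x)^2 - 2*M*(u x)^3)/x^2)/(A M l rfun x + 1/l) - 1/(2*l^3) := by
      filter_upwards [hev, hAeq, hinner0] with x ⟨hx0, hr0, hu0, hu2, hv1, hE⟩ hA hin
      have hxne : x ≠ 0 := ne_of_lt hx0
      have hA0 : 0 ≤ A M l rfun x := by rw [hA]; exact Real.sqrt_nonneg _
      have hAl : 0 < A M l rfun x + 1/l := by positivity
      have hA2 : (A M l rfun x)^2 = 1/l^2 + (u x)^2 - 2*M*(u x)^3 := by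
        rw [hA]; exact Real.sq_sqrt hin
      have hsub : A M l rfun x - 1/l = ((u x)^2 - 2*M*(u x)^3)/(A M l rfun x + 1/l) := by
        rw [eq_div_iff (ne_of_gt hAl)]
        linear_combination hA2
      have key : (A M l rfun x - 1/l - x^2/(2*l^3))/x^2
          = (A M l rfun x - 1/l)/x^2 - 1/(2*l^3) := by
        rw [sub_div, div_right_comm (x^2), div_self (pow_ne_zero 2 hxne)]
      rw [key, hsub, div_right_comm]
    have hnum : Tendsto (fun x => ((u x)^2 - 2*M*(u x)^3)/x^2) L (nhds (1/l^4)) := by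
      have hptw : ∀ᶠ x in L, (u x / x)^2 - 2*M*(u x)*(u x / x)^2
          = ((u x)^2 - 2*M*(u x)^3)/x^2 := by
        filter_upwards [hev] with x ⟨hx0, _⟩
        have hxne : x ≠ 0 := ne_of_lt hx0
        field_simp
      have h := (T1.pow 2).sub (((T3.const_mul (2*M)).mul (T1.pow 2)))
      have hval : ((-(1/l^2))^2 - 2*M*0*((-(1/l^2))^2) : ℝ) = 1/l^4 := by
        field_simp
        ring
      rw [hval] at h
      exact Tendsto.congr' hptw h
    have hden : Tendsto (fun x => A M l rfun x + 1/l) L (nhds (2/l)) := by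
      have h := T5.add (tendsto_const_nhds (x := (1/l : ℝ)))
      rw [show (1/l + 1/l : ℝ) = 2/l from by ring] at h
      exact h
    have hq : Tendsto (fun x => (((u x)^2 - 2*M*(u x)^3)/x^2)/(A M l rfun x + 1/l) - 1/(2*l^3)) L
        (nhds ((1/l^4)/(2/l) - 1/(2*l^3))) :=
      (hnum.div hden (by positivity : (0:ℝ) < 2/l).ne').sub_const _
    have hval0 : ((1:ℝ)/l^4)/(2/l) - 1/(2*l^3) = 0 := by
      rw [sub_eq_zero, div_div_eq_mul_div]
      field_simp
    rw [hval0] at hq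
    exact Tendsto.congr' (hEq1.mono fun x hx => hx.symm) hq
  -- w/x³ → 0
  have Tw : Tendsto (fun x => (u x + x/l^2 + x^3/(3*l^4))/x^3) L (nhds 0) := by
    apply squeeze_zero_norm' (a := fun x => K₂/l^4 * |x|^1)
    · filter_upwards [hev, b2] with x ⟨hx0, hr0, hu0, hu2, hv1, hE⟩ hb2
      have hxne : x ≠ 0 := ne_of_lt hx0
      have habs : |x| = -x := abs_of_neg hx0
      have hid : (u x + x/l^2 + x^3/(3*l^4))/x^3
          = (l^4*(u x) + l^2*x + x^3/3)/(l^4*x^3) := by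
        field_simp
      rw [Real.norm_eq_abs, hid, abs_div, abs_mul]
      rw [abs_of_nonneg (show (0:ℝ) ≤ l^4 by positivity)]
      rw [div_le_iff₀ (by positivity : (0:ℝ) < l^4 * |x^3|)]
      calc |l^4*(u x) + l^2*x + x^3/3| ≤ K₂ * (-x)^4 := hb2
        _ = K₂/l^4 * |x|^1 * (l^4 * |x^3|) := by
            rw [abs_pow, habs]
            field_simp
    · exact hconst_pow _ 1 (by norm_num)
  -- B = A / u
  have hBeq : ∀ᶠ x in L, B M l rfun x = A M l rfun x / u x := by
    filter_upwards [hev] with x ⟨hx0, hr0, hu0, hu2, hv1, hE⟩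
    simp only [hu]
    have hrne : rfun x ≠ 0 := ne_of_gt hr0
    show Real.sqrt (F M l (rfun x)) = (Real.sqrt (F M l (rfun x)) / rfun x) / (rfun x)⁻¹
    rw [div_inv_eq_mul, div_mul_cancel₀ _ hrne]
  -- the key algebraic identity for goal 2
  have hEq2 : ∀ᶠ x in L, (B M l rfun x + l/x + x/(6*l))/x
      = ((A M l rfun x - 1/l - x^2/(2*l^3))/x^2)*(x/u x) + (1/(6*l^3))*(x/u x)
        + l*((u x + x/l^2 + x^3/(3*l^4))/x^3)*(x/u x) + 1/(6*l) := by
    filter_upwards [hev, hBeq] with x ⟨hx0, hr0, hu0, hu2, hv1, hE⟩ hB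
    have hxne : x ≠ 0 := ne_of_lt hx0
    have hune : u x ≠ 0 := ne_of_gt hu0
    rw [hB]
    field_simp
    ring
  have t_a := G1.mul T2
  have t_b := T2.const_mul (1/(6*l^3) : ℝ)
  have t_c := (Tw.const_mul l).mul T2
  have hsum := ((t_a.add t_b).add t_c).add_const (1/(6*l) : ℝ)
  have hv : ((0*(-l^2) + 1/(6*l^3)*(-l^2)) + (l*0)*(-l^2)) + 1/(6*l) = (0:ℝ) := by
    field_simp
    ring
  rw [hv] at hsum
  have G2 : Tendsto (fun x => (B M l rfun x + l/x + x/(6*l)) / x) L (nhds 0) :=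
    Tendsto.congr' (hEq2.mono fun x hx => hx.symm) hsum
  exact ⟨G1, G2⟩

end Part2

theorem stmt_4 (M l : ℝ) (hM : 0 < M) (hl : 0 < l)
    (rSAdS : ℝ) (hrS : 0 < rSAdS) (hroot : F M l rSAdS = 0)
    (hFpos : ∀ r, rSAdS < r → 0 < F M l r)
    (hbij : Set.BijOn (fun r => -∫ s in Set.Ioi r, (F M l s)⁻¹)
      (Set.Ioi rSAdS) (Set.Iio 0))
    (rfun : ℝ → ℝ)
    (hrange : ∀ x, x < 0 → rSAdS < rfun x)
    (hinv1 : ∀ x, x < 0 → -(∫ s in Set.Ioi (rfun x), (F M l s)⁻¹) = x)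
    (hinv2 : ∀ r, rSAdS < r → rfun (-(∫ s in Set.Ioi r, (F M l s)⁻¹)) = r) :
    Tendsto (fun x => (A M l rfun x - 1/l - x^2/(2*l^3)) / x^2)
      (nhdsWithin 0 (Set.Iio 0)) (nhds 0) ∧
    Tendsto (fun x => (B M l rfun x + l/x + x/(6*l)) / x)
      (nhdsWithin 0 (Set.Iio 0)) (nhds 0) := by
  set C : ℝ := 2*M*l^4 + l^6 + 2*M*l^6 with hC
  have hCpos : 0 < C := by positivity
  set R : ℝ := max (rSAdS + 1) (max (l + 1) (max 1 (2*M))) with hR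
  set R₁ : ℝ := max R (max (2*l) (max 1 (C/l^2))) with hR₁
  have hRrS : rSAdS < R := lt_of_lt_of_le (lt_add_one _) (le_max_left _ _)
  have hR1 : (1:ℝ) ≤ R := le_trans (le_max_left 1 (2*M)) (le_trans (le_max_right _ _) (le_max_right _ _))
  have hR₁R : R ≤ R₁ := le_max_left _ _
  have hR₁1 : (1:ℝ) ≤ R₁ := le_trans hR1 hR₁R
  -- integrability of F⁻¹
  have hInt : ∀ r, rSAdS < r → IntegrableOn (fun s => (F M l s)⁻¹) (Ioi r) := by
    intro r hr
    by_contra h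
    have hm := hbij.mapsTo (show r ∈ Ioi rSAdS from hr)
    rw [MeasureTheory.integral_undef h] at hm
    simp at hm
  -- pointwise tail bound
  have hpt : ∀ s : ℝ, R ≤ s → |(F M l s)⁻¹ - (l^2 * (s^2)⁻¹ - l^4 * (s^4)⁻¹)| ≤ C * (s^5)⁻¹ := by
    intro s hs
    have hs1 : (1:ℝ) ≤ s := le_trans hR1 hs
    have hs0 : (0:ℝ) < s := lt_of_lt_of_le one_pos hs1
    have hsl : l ≤ s := by
      have : l + 1 ≤ R := le_trans (le_max_left _ _) (le_max_right _ _)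
      linarith
    have hsM : 2*M ≤ s := by
      have : 2*M ≤ R := le_trans (le_max_right 1 (2*M)) (le_trans (le_max_right _ _) (le_max_right _ _))
      linarith
    have hlsM : 0 ≤ l^2*(s - 2*M) := by nlinarith
    have hD : s^3 ≤ s^3 + l^2*s - 2*M*l^2 := by nlinarith
    have hDpos : 0 < s^3 + l^2*s - 2*M*l^2 := by nlinarith [pow_pos hs0 3]
    have hFs : F M l s = (s^3 + l^2*s - 2*M*l^2) / (l^2 * s) := by
      unfold F; field_simp; ring
    have hFinv : (F M l s)⁻¹ = l^2 * s / (s^3 + l^2*s - 2*M*l^2) := by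
      rw [hFs, inv_div]
    have hiden : (F M l s)⁻¹ - (l^2 * (s^2)⁻¹ - l^4 * (s^4)⁻¹)
        = (2*M*l^4*s^2 + l^6*s - 2*M*l^6) / (s^4 * (s^3 + l^2*s - 2*M*l^2)) := by
      rw [hFinv]
      generalize hDD : s^3 + l^2*s - 2*M*l^2 = D at hDpos ⊢
      field_simp
      rw [← hDD]
      ring
    rw [hiden]
    have hs2 : l^2 ≤ s^2 := by nlinarith
    have haux : 2*M*l^4*l^2 ≤ 2*M*l^4*s^2 :=
      mul_le_mul_of_nonneg_left hs2 (by positivity)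
    have hnum0 : 0 ≤ 2*M*l^4*s^2 + l^6*s - 2*M*l^6 := by
      have h6 : (0:ℝ) ≤ l^6*s := by positivity
      nlinarith
    have hden0 : 0 < s^4 * (s^3 + l^2*s - 2*M*l^2) := by positivity
    rw [abs_of_nonneg (div_nonneg hnum0 hden0.le)]
    rw [div_le_iff₀ hden0]
    have hCs : C * s^2 = 2*M*l^4*s^2 + l^6*s^2 + 2*M*l^6*s^2 := by rw [hC]; ring
    have hss : l^6*s ≤ l^6*s^2 :=
      mul_le_mul_of_nonneg_left (by nlinarith : s ≤ s^2) (by positivity)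
    have h1 : 2*M*l^4*s^2 + l^6*s - 2*M*l^6 ≤ C * s^2 := by
      have hMs : (0:ℝ) ≤ 2*M*l^6*s^2 := by positivity
      have hMl : (0:ℝ) ≤ 2*M*l^6 := by positivity
      rw [hCs]; linarith
    have h2 : s^7 ≤ s^4 * (s^3 + l^2*s - 2*M*l^2) := by
      have := mul_le_mul_of_nonneg_left hD (by positivity : (0:ℝ) ≤ s^4)
      nlinarith
    have h5 : C * s^2 = C * (s^5)⁻¹ * s^7 := by field_simp
    calc 2*M*l^4*s^2 + l^6*s - 2*M*l^6 ≤ C * s^2 := h1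
      _ = C * (s^5)⁻¹ * s^7 := h5
      _ ≤ C * (s^5)⁻¹ * (s^4 * (s^3 + l^2*s - 2*M*l^2)) := by gcongr
  -- integral estimate
  have hI : ∀ r, R ≤ r →
      |(∫ s in Ioi r, (F M l s)⁻¹) - (l^2 * r⁻¹ - l^4/3 * (r^3)⁻¹)| ≤ C/4 * (r^4)⁻¹ := by
    intro r hr
    have hr0 : (0:ℝ) < r := lt_of_lt_of_le one_pos (le_trans hR1 hr)
    have hrS' : rSAdS < r := lt_of_lt_of_le hRrS hr
    obtain ⟨hi2, he2⟩ := intpow 0 r hr0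
    obtain ⟨hi4, he4⟩ := intpow 2 r hr0
    obtain ⟨hi5, he5⟩ := intpow 3 r hr0
    simp only [Nat.reduceAdd, Nat.cast_ofNat, Nat.cast_zero, zero_add] at hi2 he2 hi4 he4 hi5 he5
    set g : ℝ → ℝ := fun s => (F M l s)⁻¹ - (l^2 * (s^2)⁻¹ - l^4 * (s^4)⁻¹) with hg
    have hintmain : IntegrableOn (fun s => l^2 * (s^2)⁻¹ - l^4 * (s^4)⁻¹) (Ioi r) :=
      (hi2.const_mul (l^2)).sub (hi4.const_mul (l^4))
    have hgint : IntegrableOn g (Ioi r) := (hInt r hrS').sub hintmain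
    have hsplit : (∫ s in Ioi r, (F M l s)⁻¹)
        = (∫ s in Ioi r, (l^2 * (s^2)⁻¹ - l^4 * (s^4)⁻¹)) + ∫ s in Ioi r, g s := by
      rw [← integral_add hintmain hgint]
      congr 1
      funext s
      simp [hg]
    have hval : (∫ s in Ioi r, (l^2 * (s^2)⁻¹ - l^4 * (s^4)⁻¹))
        = l^2 * r⁻¹ - l^4/3 * (r^3)⁻¹ := by
      rw [integral_sub (hi2.const_mul (l^2)) (hi4.const_mul (l^4)),
        integral_const_mul, integral_const_mul, he2, he4, mul_inv]
      norm_num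
      ring
    have hgbound : |∫ s in Ioi r, g s| ≤ C/4 * (r^4)⁻¹ := by
      have h1 : |∫ s in Ioi r, g s| ≤ ∫ s in Ioi r, |g s| := by
        simpa [Real.norm_eq_abs] using
          norm_integral_le_integral_norm (μ := volume.restrict (Ioi r)) g
      have h2 : (∫ s in Ioi r, |g s|) ≤ ∫ s in Ioi r, C * (s^5)⁻¹ := by
        apply setIntegral_mono_on
        · simpa [Real.norm_eq_abs, IntegrableOn] using hgint.norm
        · exact hi5.const_mul C
        · exact measurableSet_Ioi
        · intro s hs
          exact hpt s (le_trans hr (le_of_lt hs))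
      have h3 : (∫ s in Ioi r, C * (s^5)⁻¹) = C/4 * (r^4)⁻¹ := by
        rw [integral_const_mul, he5, mul_inv]
        norm_num
        ring
      linarith [le_trans h1 (h2.trans_eq h3)]
    calc |(∫ s in Ioi r, (F M l s)⁻¹) - (l^2 * r⁻¹ - l^4/3 * (r^3)⁻¹)|
        = |∫ s in Ioi r, g s| := by rw [hsplit, hval]; congr 1; ring
      _ ≤ C/4 * (r^4)⁻¹ := hgbound
  -- lower bound for the integral
  have hIlow : ∀ r, R₁ ≤ r → l^2/(2*r) ≤ ∫ s in Ioi r, (F M l s)⁻¹ := by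
    intro r hr
    have h1r : (1:ℝ) ≤ r := le_trans hR₁1 hr
    have hr0 : (0:ℝ) < r := by linarith
    have h2l : 2*l ≤ r := le_trans (le_trans (le_max_left (2*l) _) (le_max_right R _)) hr
    have hCl : C/l^2 ≤ r :=
      le_trans (le_trans (le_max_right 1 (C/l^2)) (le_trans (le_max_right (2*l) _) (le_max_right R _))) hr
    have hIr := (abs_le.1 (hI r (le_trans hR₁R hr))).1
    have hCr : C ≤ r * l^2 := by
      rw [div_le_iff₀ (by positivity : (0:ℝ) < l^2)] at hCl
      linarith
    have hr2 : 4*l^2 ≤ r^2 := by nlinarith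
    have haux1 : 4*l^4*r ≤ l^2*r^3 := by
      have := mul_le_mul_of_nonneg_left hr2 (by positivity : (0:ℝ) ≤ l^2*r)
      nlinarith
    have haux2 : r ≤ r^3 := by nlinarith [sq_nonneg (r - 1), sq_nonneg (r + 1)]
    have haux3 : C ≤ r^3*l^2 := by
      have h := mul_le_mul_of_nonneg_right haux2 (by positivity : (0:ℝ) ≤ l^2)
      nlinarith
    have hpoly : 0 ≤ l^2*r^3/2 - l^4*r/3 - C/4 := by nlinarith
    have e : l^2 * r⁻¹ - l^4/3*(r^3)⁻¹ - C/4*(r^4)⁻¹ - l^2/(2*r)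
        = (l^2*r^3/2 - l^4*r/3 - C/4)/r^4 := by
      field_simp
      ring
    have hq : 0 ≤ (l^2*r^3/2 - l^4*r/3 - C/4)/r^4 := div_nonneg hpoly (by positivity)
    rw [← e] at hq
    linarith
  -- the integral lower bound transfers through the max
  have hlow2 : ∀ x, x < 0 → l^2/(2*(max (rfun x) R₁)) ≤ -x := by
    intro x hx
    set m := max (rfun x) R₁ with hm
    have hm1 : R₁ ≤ m := le_max_right _ _
    have h1 : l^2/(2*m) ≤ ∫ s in Ioi m, (F M l s)⁻¹ := hIlow m hm1
    have hsub : Ioi m ⊆ Ioi (rfun x) := Ioi_subset_Ioi (le_max_left _ _)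
    have hmono : (∫ s in Ioi m, (F M l s)⁻¹) ≤ ∫ s in Ioi (rfun x), (F M l s)⁻¹ := by
      apply setIntegral_mono_set (hInt _ (hrange x hx))
      · apply (ae_restrict_iff' measurableSet_Ioi).2
        exact ae_of_all _ fun s hs => inv_nonneg.2 (hFpos s (lt_trans (hrange x hx) hs)).le
      · exact hsub.eventuallyLE
    have h2 := hinv1 x hx
    linarith [h1.trans hmono]
  have hFpos' : ∀ x, x < 0 → 0 < F M l (rfun x) := fun x hx => hFpos _ (hrange x hx)
  -- the eventual hypotheses near 0⁻
  have hev : ∀ᶠ x in nhdsWithin (0:ℝ) (Set.Iio 0),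
      x < 0 ∧ 0 < rfun x ∧ 0 < (rfun x)⁻¹ ∧ (rfun x)⁻¹ ≤ 2*(-x)/l^2 ∧ (-x) ≤ 1 ∧
      |(-x) - (l^2*(rfun x)⁻¹ - l^4/3*((rfun x)⁻¹)^3)| ≤ C/4*((rfun x)⁻¹)^4 := by
    set δ : ℝ := min 1 (min (l^2/2) (l^2/(2*(R₁+1)))) with hδ
    have hδpos : 0 < δ := by
      apply lt_min one_pos
      apply lt_min <;> positivity
    have hδ1 : δ ≤ 1 := min_le_left _ _
    have hδ3 : δ ≤ l^2/(2*(R₁+1)) := le_trans (min_le_right _ _) (min_le_right _ _)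
    have hmem : Ioo (-δ) (0:ℝ) ∈ nhdsWithin (0:ℝ) (Set.Iio 0) :=
      Ioo_mem_nhdsLT_of_mem ⟨by linarith, le_refl 0⟩
    filter_upwards [hmem] with x hx
    obtain ⟨hx1, hx2⟩ := hx
    have hv0 : 0 < -x := by linarith
    have hvδ : -x < δ := by linarith
    have hl2 := hlow2 x hx2
    set m := max (rfun x) R₁ with hm
    have hm0 : 0 < m := lt_of_lt_of_le one_pos (le_trans hR₁1 (le_max_right _ _))
    have hlm : l^2 ≤ -x*(2*m) := by
      rw [div_le_iff₀ (by positivity : (0:ℝ) < 2*m)] at hl2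
      linarith
    have hRx : R₁ ≤ rfun x := by
      by_contra h
      push_neg at h
      have hmR : m = R₁ := max_eq_right h.le
      have hstep : -x*(2*R₁) < (l^2/(2*(R₁+1)))*(2*R₁) := by
        apply mul_lt_mul_of_pos_right _ (by positivity : (0:ℝ) < 2*R₁)
        linarith
      have heq2 : (l^2/(2*(R₁+1)))*(2*R₁) = R₁*l^2/(R₁+1) := by
        field_simp
      have hfin : R₁*l^2/(R₁+1) < l^2 := by
        rw [div_lt_iff₀ (by positivity : (0:ℝ) < R₁+1)]
        nlinarith
      rw [hmR] at hlm
      rw [heq2] at hstep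
      linarith
    have hr0 : 0 < rfun x := lt_of_lt_of_le (lt_of_lt_of_le one_pos hR₁1) hRx
    have hmx : m = rfun x := max_eq_left hRx
    rw [hmx] at hlm
    have hu2 : (rfun x)⁻¹ ≤ 2*(-x)/l^2 := by
      rw [inv_eq_one_div, div_le_div_iff₀ hr0 (by positivity : (0:ℝ) < l^2)]
      nlinarith
    have hIx := hI (rfun x) (le_trans hR₁R hRx)
    have hIval : (∫ s in Ioi (rfun x), (F M l s)⁻¹) = -x := by
      have := hinv1 x hx2
      linarith
    rw [hIval, ← inv_pow, ← inv_pow] at hIx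
    have habs : |(-x) - (l^2*(rfun x)⁻¹ - l^4/3*((rfun x)⁻¹)^3)| ≤ C/4*((rfun x)⁻¹)^4 := by
      have e : (-x) - (l^2*(rfun x)⁻¹ - l^4/3*((rfun x)⁻¹)^3)
          = -x - (l^2 * (rfun x)⁻¹ - l^4/3 * ((rfun x)⁻¹)^3) := by ring
      rw [e]
      exact hIx
    exact ⟨hx2, hr0, inv_pos.2 hr0, hu2, by linarith, habs⟩
  exact part2 M l hM hl rfun C hCpos hFpos' hev
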